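/- Let R be a connected ℕ-graded K-algebra admitting a presentation φ : K⟨t₁,…,tₘ⟩ → R that is a surjective K-algebra homomorphism with φ(tₖ) ∈ R₁ for every k and whose kernel is generated, as a two-sided ideal, by finitely many elements that are homogeneous with respect to the word-length grading of K⟨t₁,…,tₘ⟩. Let A be a graded skew PBW extension of R with generators x₁,…,xₙ. Then A is finitely presented: there is a surjective K-algebra homomorphism F : K⟨y₁,…,y_{m+n}⟩ → A with F(yₖ) = φ(tₖ) for 1 ≤ k ≤ m and F(y_{m+j}) = xⱼ for 1 ≤ j ≤ n, whose kernel is generated, as a two-sided ideal, by finitely many elements homogeneous with respect to the word-length grading of K⟨y₁,…,y_{m+n}⟩. Moreover, if ker φ is generated by homogeneous elements of degree 2, then ker F is generated by finitely many homogeneous elements of degree 2 (so A is a homogeneous quadratic algebra whenever R is). -/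

import Mathlib

noncomputable section

open scoped BigOperators

/-- The monomial `x₁^{α₁} ⋯ xₙ^{αₙ}` with factors in increasing index order. -/
def pbwMonomial {A : Type*} [Ring A] {n : ℕ} (x : Fin n → A) (α : Fin n → ℕ) : A :=
  (List.ofFn fun i => x i ^ α i).prod

/-- `A` is a skew PBW extension of the `K`-subalgebra `R` with generators `x i`. -/
structure IsSkewPBWExtension (K : Type*) {A : Type*} [Field K] [Ring A] [Algebra K A]
    (R : Subalgebra K A) {n : ℕ} (x : Fin n → A) : Prop where
  isBasis : ∃ b : Module.Basis (Fin n → ℕ) R A, ∀ α, (b α : A) = pbwMonomial x α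
  coeff_comm : ∀ i : Fin n, ∀ r ∈ R, r ≠ 0 →
    ∃ c ∈ R, c ≠ 0 ∧ x i * r - c * x i ∈ R
  gens_comm : ∀ i j : Fin n, ∃ c ∈ R, c ≠ 0 ∧
    ∃ r0 ∈ R, ∃ rr : Fin n → A, (∀ k, rr k ∈ R) ∧
      x j * x i - c * (x i * x j) = r0 + ∑ k, rr k * x k

/-- `A` is a graded skew PBW extension of the ℕ-graded algebra `R`,
whose grading is given by the family `RG` of `K`-subspaces of `A`. -/
structure IsGradedSkewPBWExtension (K : Type*) {A : Type*} [Field K] [Ring A] [Algebra K A]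
    (R : Subalgebra K A) (RG : ℕ → Submodule K A) {n : ℕ} (x : Fin n → A)
    extends IsSkewPBWExtension K R x : Prop where
  grading_le : ∀ p, RG p ≤ Subalgebra.toSubmodule R
  grading_sup : (⨆ p, RG p) = Subalgebra.toSubmodule R
  grading_indep : iSupIndep RG
  grading_one : (1 : A) ∈ RG 0
  grading_mul : ∀ p q : ℕ, ∀ a ∈ RG p, ∀ b ∈ RG q, a * b ∈ RG (p + q)
  sigma_delta : ∀ i : Fin n, ∃ σ : R →+* R, Function.Bijective σ ∧
    (∀ p : ℕ, ∀ r : R, (r : A) ∈ RG p → ((σ r : A) ∈ RG p)) ∧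
    ∃ δ : R → R,
      (∀ r s : R, δ (r + s) = δ r + δ s) ∧
      (∀ r s : R, δ (r * s) = σ r * δ s + δ r * s) ∧
      (∀ p : ℕ, ∀ r : R, (r : A) ∈ RG p → ((δ r : A) ∈ RG (p + 1))) ∧
      (∀ r : R, x i * (r : A) = (σ r : A) * x i + (δ r : A))
  gens_comm_graded : ∀ i j : Fin n, ∃ c : R, IsUnit c ∧ (c : A) ∈ RG 0 ∧
    ∃ r0 ∈ RG 2, ∃ rr : Fin n → A, (∀ k, rr k ∈ RG 1) ∧
      x j * x i - (c : A) * (x i * x j) = r0 + ∑ k, rr k * x k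

/-- The `p`-th graded component of a graded skew PBW extension: the `K`-span of the
elements `r · x^α` with `r ∈ R_t` and `t + |α| = p`. -/
def gradedPart (K : Type*) {A : Type*} [Field K] [Ring A] [Algebra K A]
    (RG : ℕ → Submodule K A) {n : ℕ} (x : Fin n → A) (p : ℕ) : Submodule K A :=
  Submodule.span K
    {a : A | ∃ (t : ℕ) (α : Fin n → ℕ), ∃ r ∈ RG t, t + (∑ i, α i) = p ∧ a = r * pbwMonomial x α}


/-- The word-length degree-`d` component of the free algebra `K⟨y₁,…,y_s⟩`:
the `d`-th power of the span of the generators. -/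
def wordLengthComponent (K : Type*) [Field K] (s : ℕ) (d : ℕ) :
    Submodule K (FreeAlgebra K (Fin s)) :=
  (Submodule.span K (Set.range (FreeAlgebra.ι K : Fin s → FreeAlgebra K (Fin s)))) ^ d

/-- The two-sided ideal of a `K`-algebra generated by a set `S`, viewed as the `K`-span
of all elements `a * s * b` with `s ∈ S`. -/
def twoSidedSpan (K : Type*) [Field K] {B : Type*} [Ring B] [Algebra K B] (S : Set B) :
    Submodule K B :=
  Submodule.span K {z : B | ∃ a s b, s ∈ S ∧ z = a * s * b}


section AuxLemmas


lemma pbwMonomial_zero {A : Type*} [Ring A] {n : ℕ} (x : Fin n → A) :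
    pbwMonomial x 0 = 1 := by
  simp [pbwMonomial]

lemma pbwMonomial_succ {A : Type*} [Ring A] {n : ℕ} (x : Fin (n+1) → A) (α : Fin (n+1) → ℕ) :
    pbwMonomial x α = x 0 ^ α 0 * pbwMonomial (fun i : Fin n => x i.succ) (fun i => α i.succ) := by
  simp [pbwMonomial, List.ofFn_succ]

lemma pbwMonomial_mul_update {A : Type*} [Ring A] : ∀ {n : ℕ} (x : Fin n → A)
    (α : Fin n → ℕ) (j : Fin n), (∀ k, k < j → α k = 0) →
    x j * pbwMonomial x α = pbwMonomial x (Function.update α j (α j + 1)) := by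
  intro n
  induction n with
  | zero => intro x α j _; exact absurd j.2 (by omega)
  | succ n ih =>
    intro x α j hj
    induction j using Fin.cases with
    | zero =>
      rw [pbwMonomial_succ, pbwMonomial_succ x (Function.update α 0 (α 0 + 1)), ← mul_assoc,
        ← pow_succ']
      have h1 : Function.update α 0 (α 0 + 1) 0 = α 0 + 1 := by simp
      have h2 : (fun i : Fin n => Function.update α 0 (α 0 + 1) i.succ) = fun i => α i.succ := by
        funext i
        rw [Function.update_of_ne (Fin.succ_ne_zero i)]
      rw [h1, h2]
    | succ j' =>
      have h0 : α 0 = 0 := hj 0 (Fin.succ_pos j')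
      have h0' : Function.update α j'.succ (α j'.succ + 1) 0 = 0 := by
        rw [Function.update_of_ne (Fin.succ_ne_zero j').symm]; exact h0
      rw [pbwMonomial_succ, pbwMonomial_succ x (Function.update α j'.succ (α j'.succ + 1)),
        h0, h0', pow_zero, one_mul, one_mul,
        ih (fun i => x i.succ) (fun i => α i.succ) j'
          (fun k hk => hj k.succ (Fin.succ_lt_succ_iff.mpr hk))]
      congr 1
      funext i
      simp only [Function.update_apply]
      by_cases hij : i = j'
      · simp [hij]
      · rw [if_neg hij, if_neg (by simpa [Fin.succ_inj] using hij)]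

lemma sum_update_succ {n : ℕ} (α : Fin n → ℕ) (j : Fin n) :
    ∑ i, Function.update α j (α j + 1) i = (∑ i, α i) + 1 := by
  rw [Finset.sum_update_of_mem (Finset.mem_univ j)]
  have h2 : ∑ i, α i = α j + ∑ x ∈ Finset.univ.erase j, α x :=
    (Finset.add_sum_erase _ α (Finset.mem_univ j)).symm
  rw [show Finset.univ \ {j} = Finset.univ.erase j from by
    ext; simp [Finset.mem_erase, and_comm], h2]
  omega

lemma pbwMonomial_peel {A : Type*} [Ring A] {n : ℕ} (x : Fin n → A) (α : Fin n → ℕ)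
    (hα : α ≠ 0) :
    ∃ (j : Fin n) (α' : Fin n → ℕ), (∀ k, k < j → α k = 0) ∧
      (∑ i, α i) = (∑ i, α' i) + 1 ∧ pbwMonomial x α = x j * pbwMonomial x α' := by
  have hex : ∃ j, α j ≠ 0 := by
    by_contra hc
    push_neg at hc
    exact hα (funext fun j => hc j)
  set s : Finset (Fin n) := Finset.univ.filter (fun j => α j ≠ 0) with hs
  have hne : s.Nonempty := ⟨hex.choose, by simp [hs, hex.choose_spec]⟩
  set j := s.min' hne with hjdef
  have hjmem : α j ≠ 0 := by
    have := s.min'_mem hne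
    simpa [hs] using this
  have hmin : ∀ k, k < j → α k = 0 := by
    intro k hk
    by_contra hc
    exact absurd (s.min'_le k (by simp [hs, hc])) (by omega)
  set α' := Function.update α j (α j - 1) with hα'
  have hupd : Function.update α' j (α' j + 1) = α := by
    funext k
    by_cases hkj : k = j
    · subst hkj; simp [hα']; omega
    · simp [hα', Function.update_apply, hkj]
  refine ⟨j, α', hmin, ?_, ?_⟩
  · rw [← hupd, sum_update_succ α' j]
  · rw [pbwMonomial_mul_update x α' j (fun k hk => by
      simp [hα', Function.update_apply, (show k ≠ j from Fin.ne_of_lt hk), hmin k hk]), hupd]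


section tss
variable {K : Type*} [Field K] {B : Type*} [Ring B] [Algebra K B] {S : Set B}

lemma mem_twoSidedSpan_of_mem {s : B} (hs : s ∈ S) : s ∈ twoSidedSpan K S :=
  Submodule.subset_span ⟨1, s, 1, hs, by simp⟩

lemma twoSidedSpan_mul_left (u : B) {z : B} (hz : z ∈ twoSidedSpan K S) :
    u * z ∈ twoSidedSpan K S := by
  induction hz using Submodule.span_induction with
  | mem z hz =>
    obtain ⟨a, s, b, hsS, rfl⟩ := hz
    exact Submodule.subset_span ⟨u * a, s, b, hsS, by simp [mul_assoc]⟩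
  | zero => simpa using (twoSidedSpan K S).zero_mem
  | add y z _ _ hy hz => rw [mul_add]; exact add_mem hy hz
  | smul c z _ hz => rw [mul_smul_comm]; exact Submodule.smul_mem _ c hz

lemma twoSidedSpan_mul_right (u : B) {z : B} (hz : z ∈ twoSidedSpan K S) :
    z * u ∈ twoSidedSpan K S := by
  induction hz using Submodule.span_induction with
  | mem z hz =>
    obtain ⟨a, s, b, hsS, rfl⟩ := hz
    exact Submodule.subset_span ⟨a, s, b * u, hsS, by simp [mul_assoc]⟩
  | zero => simpa using (twoSidedSpan K S).zero_mem
  | add y z _ _ hy hz => rw [add_mul]; exact add_mem hy hz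
  | smul c z _ hz => rw [smul_mul_assoc]; exact Submodule.smul_mem _ c hz

lemma twoSidedSpan_mono {S' : Set B} (h : S ⊆ S') :
    twoSidedSpan K S ≤ twoSidedSpan K S' :=
  Submodule.span_mono (fun z => by rintro ⟨a, s, b, hsS, rfl⟩; exact ⟨a, s, b, h hsS, rfl⟩)

lemma twoSidedSpan_le_ker {A : Type*} [Ring A] [Algebra K A] (F : B →ₐ[K] A)
    (hS : ∀ s ∈ S, F s = 0) :
    twoSidedSpan K S ≤ (RingHom.ker F).restrictScalars K := by
  rw [twoSidedSpan, Submodule.span_le]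
  rintro z ⟨a, s, b, hsS, rfl⟩
  simp only [Submodule.restrictScalars_mem, SetLike.mem_coe, RingHom.mem_ker, map_mul,
    hS s hsS, mul_zero, zero_mul]

lemma twoSidedSpan_le_of_subset_span {S' : Set B} (h : ∀ s ∈ S, s ∈ twoSidedSpan K S') : twoSidedSpan K S ≤ twoSidedSpan K S' := by
  rw [twoSidedSpan, Submodule.span_le]
  rintro z ⟨a, s, b, hsS, rfl⟩
  exact twoSidedSpan_mul_right b (twoSidedSpan_mul_left a (h s hsS))

end tss

section wlc
variable {K : Type*} [Field K] {s : ℕ}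

lemma submodule_pow_le_pow_left {B : Type*} [Ring B] [Algebra K B] {M N : Submodule K B} (h : M ≤ N) :
    ∀ d : ℕ, M ^ d ≤ N ^ d := by
  intro d
  induction d with
  | zero => simp
  | succ d ih => rw [pow_succ, pow_succ]; exact mul_le_mul' ih h

lemma mul_mem_wlc {d e : ℕ} {g g' : FreeAlgebra K (Fin s)}
    (hg : g ∈ wordLengthComponent K s d) (hg' : g' ∈ wordLengthComponent K s e) :
    g * g' ∈ wordLengthComponent K s (d + e) := by
  rw [wordLengthComponent, pow_add]
  exact Submodule.mul_mem_mul hg hg'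

lemma ι_mem_wlc (i : Fin s) : FreeAlgebra.ι K i ∈ wordLengthComponent K s 1 := by
  rw [wordLengthComponent, pow_one]
  exact Submodule.subset_span (Set.mem_range_self i)

lemma algebraMap_mem_wlc (r : K) :
    algebraMap K (FreeAlgebra K (Fin s)) r ∈ wordLengthComponent K s 0 := by
  rw [wordLengthComponent, pow_zero, Algebra.algebraMap_eq_smul_one, Submodule.one_eq_span]
  exact Submodule.smul_mem _ r (Submodule.subset_span rfl)

lemma one_mem_wlc : (1 : FreeAlgebra K (Fin s)) ∈ wordLengthComponent K s 0 := by
  simpa using algebraMap_mem_wlc (K := K) (s := s) 1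

lemma map_wlc {s' : ℕ} (ψ : FreeAlgebra K (Fin s) →ₐ[K] FreeAlgebra K (Fin s'))
    (hψ : ∀ i, ψ (FreeAlgebra.ι K i) ∈
      Submodule.span K (Set.range (FreeAlgebra.ι K : Fin s' → FreeAlgebra K (Fin s'))))
    {d : ℕ} {g : FreeAlgebra K (Fin s)} (hg : g ∈ wordLengthComponent K s d) :
    ψ g ∈ wordLengthComponent K s' d := by
  have hmap : Submodule.map ψ.toLinearMap
      (Submodule.span K (Set.range (FreeAlgebra.ι K : Fin s → FreeAlgebra K (Fin s)))) ≤
      Submodule.span K (Set.range (FreeAlgebra.ι K : Fin s' → FreeAlgebra K (Fin s'))) := by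
    rw [Submodule.map_span, Submodule.span_le]
    rintro z ⟨w, ⟨i, rfl⟩, rfl⟩
    exact hψ i
  have : ψ g ∈ Submodule.map ψ.toLinearMap (wordLengthComponent K s d) :=
    ⟨g, hg, rfl⟩
  rw [wordLengthComponent, Submodule.map_pow] at this
  exact submodule_pow_le_pow_left hmap d this

end wlc

section grading
variable {K A : Type*} [Field K] [Ring A] [Algebra K A]
  {R : Subalgebra K A} {RG : ℕ → Submodule K A}
  {m : ℕ} {φ : FreeAlgebra K (Fin m) →ₐ[K] A}

lemma iSup_wlc_eq_top : (⨆ d, wordLengthComponent K m d) = ⊤ := by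
  rw [eq_top_iff]
  rintro u -
  induction u using FreeAlgebra.induction with
  | grade0 r => exact Submodule.mem_iSup_of_mem 0 (algebraMap_mem_wlc r)
  | grade1 i => exact Submodule.mem_iSup_of_mem 1 (ι_mem_wlc i)
  | add a b ha hb => exact add_mem ha hb
  | mul a b ha hb =>
      obtain ⟨f, hf, rfl⟩ := (Submodule.mem_iSup_iff_exists_finsupp _ a).mp ha
      obtain ⟨g, hg, rfl⟩ := (Submodule.mem_iSup_iff_exists_finsupp _ b).mp hb
      rw [Finsupp.sum, Finsupp.sum, Finset.sum_mul_sum]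
      refine Submodule.sum_mem _ fun d _ => Submodule.sum_mem _ fun e _ => ?_
      exact Submodule.mem_iSup_of_mem (d + e) (mul_mem_wlc (hf d) (hg e))

lemma phi_map_wlc (hone : (1:A) ∈ RG 0)
    (hmul : ∀ p q : ℕ, ∀ a ∈ RG p, ∀ b ∈ RG q, a * b ∈ RG (p + q))
    (hdeg1 : ∀ k : Fin m, φ (FreeAlgebra.ι K k) ∈ RG 1) :
    ∀ d : ℕ, ∀ v ∈ wordLengthComponent K m d, φ v ∈ RG d := by
  intro d
  induction d with
  | zero =>
    intro v hv
    rw [wordLengthComponent, pow_zero, Submodule.one_eq_span] at hv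
    obtain ⟨c, rfl⟩ := Submodule.mem_span_singleton.mp hv
    rw [map_smul, map_one]
    exact Submodule.smul_mem _ c hone
  | succ d ih =>
    intro v hv
    have heq : wordLengthComponent K m (d+1)
        = wordLengthComponent K m d * wordLengthComponent K m 1 := by
      rw [wordLengthComponent, wordLengthComponent, wordLengthComponent, pow_succ, pow_one]
    rw [heq] at hv
    have hle : wordLengthComponent K m d * wordLengthComponent K m 1 ≤
        (RG (d + 1)).comap φ.toLinearMap := by
      refine Submodule.mul_le.mpr fun a ha b hb => ?_
      have hb1 : φ b ∈ RG 1 := by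
        rw [wordLengthComponent, pow_one] at hb
        have : Submodule.span K (Set.range (FreeAlgebra.ι K : Fin m → _)) ≤
            (RG 1).comap φ.toLinearMap := by
          rw [Submodule.span_le]; rintro z ⟨k, rfl⟩; exact hdeg1 k
        exact this hb
      simpa using hmul d 1 (φ a) (ih a ha) (φ b) hb1
    exact hle hv

lemma lift_RG (hle : ∀ p, RG p ≤ Subalgebra.toSubmodule R)
    (hindep : iSupIndep RG) (hone : (1:A) ∈ RG 0)
    (hmul : ∀ p q : ℕ, ∀ a ∈ RG p, ∀ b ∈ RG q, a * b ∈ RG (p + q))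
    (hrange : Set.range φ = (R : Set A))
    (hdeg1 : ∀ k : Fin m, φ (FreeAlgebra.ι K k) ∈ RG 1)
    (d : ℕ) {a : A} (ha : a ∈ RG d) :
    ∃ v ∈ wordLengthComponent K m d, φ v = a := by
  have haR : a ∈ (R : Set A) := hle d ha
  rw [← hrange] at haR
  obtain ⟨u, rfl⟩ := haR
  have hu : u ∈ ⨆ e, wordLengthComponent K m e := by rw [iSup_wlc_eq_top]; trivial
  obtain ⟨f, hf, rfl⟩ := (Submodule.mem_iSup_iff_exists_finsupp _ u).mp hu
  refine ⟨f d, hf d, ?_⟩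
  have hsum : φ (f.sum fun _ v => v) = f.sum fun _ v => φ v := map_finsuppSum φ f _
  have hrest : φ (f.sum fun _ v => v) - φ (f d) ∈ ⨆ e, ⨆ (_ : e ≠ d), RG e := by
    rw [hsum, ← Finsupp.add_sum_erase' f d (fun _ v => φ v) (fun _ => map_zero φ), add_sub_cancel_left]
    refine Submodule.sum_mem _ fun e he => ?_
    have hed : e ≠ d := by rintro rfl; simp [Finsupp.erase_same] at he
    refine Submodule.mem_iSup_of_mem e (Submodule.mem_iSup_of_mem hed ?_)
    rw [Finsupp.erase_ne hed]
    exact phi_map_wlc hone hmul hdeg1 e _ (hf e)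
  have hmem : φ (f.sum fun _ v => v) - φ (f d) ∈ RG d :=
    sub_mem ha (phi_map_wlc hone hmul hdeg1 d _ (hf d))
  have hd := hindep d
  rw [disjoint_iff] at hd
  have h0 : φ (f.sum fun _ v => v) - φ (f d) = 0 :=
    (Submodule.mem_bot K).mp (hd ▸ Submodule.mem_inf.mpr ⟨hmem, hrest⟩)
  exact (sub_eq_zero.mp h0).symm

end grading

lemma map_pbw {A B : Type*} [Ring A] [Ring B] (ψ : A →+* B) {n : ℕ} (y : Fin n → A)
    (α : Fin n → ℕ) : ψ (pbwMonomial y α) = pbwMonomial (fun i => ψ (y i)) α := by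
  rw [pbwMonomial, map_list_prod, List.map_ofFn, pbwMonomial]
  simp [Function.comp_def, map_pow]

section FDef
variable (K : Type*) {A : Type*} [Field K] [Ring A] [Algebra K A]
variable {m n : ℕ}

def Fhom (φ : FreeAlgebra K (Fin m) →ₐ[K] A) (x : Fin n → A) :
    FreeAlgebra K (Fin (m + n)) →ₐ[K] A :=
  FreeAlgebra.lift K (Fin.addCases (fun k => φ (FreeAlgebra.ι K k)) x)

def rhom (m n : ℕ) : FreeAlgebra K (Fin m) →ₐ[K] FreeAlgebra K (Fin (m + n)) :=
  FreeAlgebra.lift K (fun k => FreeAlgebra.ι K (Fin.castAdd n k))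

variable (φ : FreeAlgebra K (Fin m) →ₐ[K] A) (x : Fin n → A)

lemma Fhom_castAdd (k : Fin m) :
    Fhom K φ x (FreeAlgebra.ι K (Fin.castAdd n k)) = φ (FreeAlgebra.ι K k) := by
  rw [Fhom, FreeAlgebra.lift_ι_apply, Fin.addCases_left]

lemma Fhom_natAdd (j : Fin n) :
    Fhom K φ x (FreeAlgebra.ι K (Fin.natAdd m j)) = x j := by
  rw [Fhom, FreeAlgebra.lift_ι_apply, Fin.addCases_right]

lemma rhom_ι (k : Fin m) :
    rhom K m n (FreeAlgebra.ι K k) = FreeAlgebra.ι K (Fin.castAdd n k) := by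
  rw [rhom, FreeAlgebra.lift_ι_apply]

lemma Fhom_rhom (v : FreeAlgebra K (Fin m)) : Fhom K φ x (rhom K m n v) = φ v := by
  have h1 : (Fhom K φ x).comp (rhom K m n) = φ := by
    apply FreeAlgebra.hom_ext
    funext k
    show (Fhom K φ x) ((rhom K m n) (FreeAlgebra.ι K k)) = φ (FreeAlgebra.ι K k)
    rw [rhom_ι, Fhom_castAdd]
  conv_rhs => rw [← h1]
  rfl

end FDef

section Surj
variable {K A : Type*} [Field K] [Ring A] [Algebra K A]
variable {R : Subalgebra K A} {m n : ℕ}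

lemma subalg_smul_def (r : R) (a : A) : r • a = (r : A) * a := rfl

lemma Fhom_surjective (φ : FreeAlgebra K (Fin m) →ₐ[K] A) (x : Fin n → A)
    (b : Module.Basis (Fin n → ℕ) R A) (hb : ∀ α, (b α : A) = pbwMonomial x α)
    (hrange : Set.range φ = (R : Set A)) :
    Function.Surjective (Fhom K φ x) := by
  intro a
  set c := b.repr a with hc
  have hv : ∀ α : Fin n → ℕ, ∃ v : FreeAlgebra K (Fin m), φ v = ((c α : R) : A) := by
    intro α
    have : ((c α : R) : A) ∈ (R : Set A) := (c α).2
    rw [← hrange] at this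
    exact this
  choose v hv using hv
  refine ⟨∑ α ∈ c.support, rhom K m n (v α) *
    pbwMonomial (fun j => FreeAlgebra.ι K (Fin.natAdd m j)) α, ?_⟩
  have hY : ∀ α, Fhom K φ x (pbwMonomial (fun j => FreeAlgebra.ι K (Fin.natAdd m j)) α)
      = pbwMonomial x α := by
    intro α
    rw [show (Fhom K φ x) (pbwMonomial (fun j => FreeAlgebra.ι K (Fin.natAdd m j)) α)
      = ((Fhom K φ x : FreeAlgebra K (Fin (m+n)) →+* A))
        (pbwMonomial (fun j => FreeAlgebra.ι K (Fin.natAdd m j)) α) from rfl, map_pbw]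
    congr 1
    funext j
    exact Fhom_natAdd K φ x j
  rw [map_sum]
  have : ∀ α ∈ c.support, Fhom K φ x (rhom K m n (v α) *
      pbwMonomial (fun j => FreeAlgebra.ι K (Fin.natAdd m j)) α) = (c α) • (b α : A) := by
    intro α _
    rw [map_mul, Fhom_rhom, hv, hY, subalg_smul_def, hb]
  rw [Finset.sum_congr rfl this]
  have h2 := b.linearCombination_repr a
  rw [Finsupp.linearCombination_apply, Finsupp.sum] at h2
  exact h2

end Surj

end AuxLemmas


section Master
variable {K A : Type*} [Field K] [Ring A] [Algebra K A]

theorem master_kernel (R : Subalgebra K A) (RG : ℕ → Submodule K A) {n : ℕ} (x : Fin n → A)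
    (h : IsGradedSkewPBWExtension K R RG x)
    (hconn : RG 0 = Submodule.span K {(1 : A)})
    {m : ℕ} (φ : FreeAlgebra K (Fin m) →ₐ[K] A)
    (hrange : Set.range φ = (R : Set A))
    (hdeg1 : ∀ k : Fin m, φ (FreeAlgebra.ι K k) ∈ RG 1)
    (T : Finset (FreeAlgebra K (Fin m)))
    (hTker : (RingHom.ker φ).restrictScalars K
      = twoSidedSpan K (T : Set (FreeAlgebra K (Fin m)))) :
    ∃ S : Finset (FreeAlgebra K (Fin (m + n))),
      (∀ g ∈ S, (∃ g₀ ∈ T, g = rhom K m n g₀) ∨ g ∈ wordLengthComponent K (m + n) 2) ∧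
      (RingHom.ker (Fhom K φ x)).restrictScalars K
        = twoSidedSpan K (S : Set (FreeAlgebra K (Fin (m + n)))) := by
  classical
  set Y : Fin n → FreeAlgebra K (Fin (m + n)) := fun j => FreeAlgebra.ι K (Fin.natAdd m j)
    with hYdef
  set ρ := rhom K m n with hρdef
  set F := Fhom K φ x with hFdef
  -- choices from the graded structure
  choose σ hσbij hσgr δ hδadd hδmul hδgr hδeq using h.sigma_delta
  choose c hcunit hc0 r0 hr0 rr hrr hceq using h.gens_comm_graded
  have hlamex : ∀ i j : Fin n, ∃ lam : K, lam • (1 : A) = ((c i j : R) : A) := by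
    intro i j
    have := hc0 i j
    rw [hconn] at this
    exact Submodule.mem_span_singleton.mp this
  choose lam hlam using hlamex
  -- the canonical elements of R corresponding to the generators of the free algebra
  have hrkmem : ∀ k : Fin m, φ (FreeAlgebra.ι K k) ∈ R := by
    intro k
    rw [← SetLike.mem_coe, ← hrange]
    exact Set.mem_range_self _
  set rk : Fin m → R := fun k => ⟨φ (FreeAlgebra.ι K k), hrkmem k⟩ with hrkdef
  -- lifts of σ i (rk k), δ i (rk k), r0, rr to the free algebra on m generators
  have hLex : ∀ (i : Fin n) (k : Fin m), ∃ v ∈ wordLengthComponent K m 1,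
      φ v = ((σ i (rk k) : R) : A) :=
    fun i k => lift_RG h.grading_le h.grading_indep h.grading_one h.grading_mul hrange hdeg1 1
      (hσgr i 1 (rk k) (hdeg1 k))
  choose L hLw hLφ using hLex
  have hQex : ∀ (i : Fin n) (k : Fin m), ∃ v ∈ wordLengthComponent K m 2,
      φ v = ((δ i (rk k) : R) : A) :=
    fun i k => lift_RG h.grading_le h.grading_indep h.grading_one h.grading_mul hrange hdeg1 2
      (hδgr i 1 (rk k) (hdeg1 k))
  choose Q hQw hQφ using hQex
  have hp0ex : ∀ i j : Fin n, ∃ v ∈ wordLengthComponent K m 2, φ v = r0 i j :=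
    fun i j => lift_RG h.grading_le h.grading_indep h.grading_one h.grading_mul hrange hdeg1 2
      (hr0 i j)
  choose p0 hp0w hp0φ using hp0ex
  have hprex : ∀ (i j : Fin n) (k : Fin n), ∃ v ∈ wordLengthComponent K m 1, φ v = rr i j k :=
    fun i j k => lift_RG h.grading_le h.grading_indep h.grading_one h.grading_mul hrange hdeg1 1
      (hrr i j k)
  choose pr hprw hprφ using hprex
  -- the relations
  set rel2 : Fin n → Fin m → FreeAlgebra K (Fin (m + n)) := fun i k =>
    Y i * ρ (FreeAlgebra.ι K k) - ρ (L i k) * Y i - ρ (Q i k) with hrel2def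
  set rel3 : Fin n → Fin n → FreeAlgebra K (Fin (m + n)) := fun i j =>
    Y j * Y i - lam i j • (Y i * Y j) - ρ (p0 i j) - ∑ k, ρ (pr i j k) * Y k with hrel3def
  set S : Finset (FreeAlgebra K (Fin (m + n))) :=
    T.image ρ ∪ (Finset.univ.image fun p : Fin n × Fin m => rel2 p.1 p.2)
      ∪ (Finset.univ.image fun p : Fin n × Fin n => rel3 p.1 p.2) with hSdef
  set I := twoSidedSpan K (S : Set (FreeAlgebra K (Fin (m + n)))) with hIdef
  have hρspan : ∀ k : Fin m, ρ (FreeAlgebra.ι K k) ∈ Submodule.span K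
      (Set.range (FreeAlgebra.ι K : Fin (m + n) → FreeAlgebra K (Fin (m + n)))) := by
    intro k
    rw [hρdef, rhom_ι]
    exact Submodule.subset_span (Set.mem_range_self _)
  -- membership of the relations in I
  have hrel2I : ∀ (i : Fin n) (k : Fin m), rel2 i k ∈ I := by
    intro i k
    refine mem_twoSidedSpan_of_mem ?_
    simp only [hSdef, Finset.coe_union, Set.mem_union, Finset.mem_coe, Finset.mem_union]
    exact Or.inl (Or.inr (Finset.mem_image.mpr ⟨(i, k), Finset.mem_univ _, rfl⟩))
  have hrel3I : ∀ i j : Fin n, rel3 i j ∈ I := by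
    intro i j
    refine mem_twoSidedSpan_of_mem ?_
    simp only [hSdef, Finset.coe_union, Set.mem_union, Finset.mem_coe, Finset.mem_union]
    exact Or.inr (Finset.mem_image.mpr ⟨(i, j), Finset.mem_univ _, rfl⟩)
  have hTI : ∀ g ∈ T, ρ g ∈ I := by
    intro g hg
    refine mem_twoSidedSpan_of_mem ?_
    simp only [hSdef, Finset.coe_union, Set.mem_union, Finset.mem_coe, Finset.mem_union]
    exact Or.inl (Or.inl (Finset.mem_image.mpr ⟨g, hg, rfl⟩))
  have hρkerI : ∀ v ∈ twoSidedSpan K (T : Set (FreeAlgebra K (Fin m))), ρ v ∈ I := by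
    intro v hv
    induction hv using Submodule.span_induction with
    | mem z hz =>
      obtain ⟨a, s, b0, hsT, rfl⟩ := hz
      rw [map_mul, map_mul]
      exact twoSidedSpan_mul_right _ (twoSidedSpan_mul_left _ (hTI s hsT))
    | zero => rw [map_zero]; exact zero_mem _
    | add y z _ _ hy hz => rw [map_add]; exact add_mem hy hz
    | smul a z _ hz => rw [map_smul]; exact Submodule.smul_mem _ _ hz
  -- F kills all elements of S
  have hFY : ∀ i : Fin n, F (Y i) = x i := fun i => Fhom_natAdd K φ x i
  have hFρ : ∀ v, F (ρ v) = φ v := fun v => Fhom_rhom K φ x v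
  have hFrel2 : ∀ (i : Fin n) (k : Fin m), F (rel2 i k) = 0 := by
    intro i k
    rw [hrel2def]
    simp only [map_sub, map_mul, hFY, hFρ, hLφ, hQφ]
    rw [show φ (FreeAlgebra.ι K k) = ((rk k : R) : A) from rfl, hδeq i (rk k)]
    abel
  have hFrel3 : ∀ i j : Fin n, F (rel3 i j) = 0 := by
    intro i j
    rw [hrel3def]
    simp only [map_sub, map_smul, map_sum, map_mul, hFY, hFρ, hp0φ, hprφ]
    have hc' : lam i j • (x i * x j) = ((c i j : R) : A) * (x i * x j) := by
      rw [← hlam i j, smul_mul_assoc, one_mul]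
    rw [hc']
    have := hceq i j
    rw [sub_eq_iff_eq_add] at this
    rw [sub_sub, sub_sub, ← add_assoc, ← sub_sub, sub_eq_zero]
    rw [this]
    abel
  have hFS : ∀ s ∈ (S : Set (FreeAlgebra K (Fin (m + n)))), F s = 0 := by
    intro s hs
    simp only [hSdef, Finset.coe_union, Set.mem_union, Finset.mem_coe, Finset.mem_union,
      Finset.mem_image] at hs
    rcases hs with ((⟨g, hg, rfl⟩ | ⟨p, _, rfl⟩) | ⟨p, _, rfl⟩)
    · rw [hFρ]
      have : g ∈ twoSidedSpan K (T : Set (FreeAlgebra K (Fin m))) :=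
        mem_twoSidedSpan_of_mem hg
      rw [← hTker] at this
      exact this
    · exact hFrel2 p.1 p.2
    · exact hFrel3 p.1 p.2
  have hIker : I ≤ (RingHom.ker F).restrictScalars K := twoSidedSpan_le_ker F hFS
  -- Lemma A : commuting Y i past elements of the first-m subalgebra
  have lemA : ∀ (i : Fin n) (v : FreeAlgebra K (Fin m)),
      ∃ v' v'' : FreeAlgebra K (Fin m), Y i * ρ v - (ρ v' * Y i + ρ v'') ∈ I := by
    intro i v
    induction v using FreeAlgebra.induction with
    | grade0 r =>
      refine ⟨algebraMap K _ r, 0, ?_⟩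
      rw [map_zero, add_zero, AlgHom.commutes, ← Algebra.commutes r (Y i),
        sub_self]
      exact zero_mem _
    | grade1 k =>
      refine ⟨L i k, Q i k, ?_⟩
      have : Y i * ρ (FreeAlgebra.ι K k) - (ρ (L i k) * Y i + ρ (Q i k)) = rel2 i k := by
        rw [hrel2def]; abel
      rw [this]
      exact hrel2I i k
    | mul a b ha hb =>
      obtain ⟨a', a'', haI⟩ := ha
      obtain ⟨b', b'', hbI⟩ := hb
      refine ⟨a' * b', a' * b'' + a'' * b, ?_⟩
      have hkey : Y i * ρ (a * b) - (ρ (a' * b') * Y i + ρ (a' * b'' + a'' * b))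
          = (Y i * ρ a - (ρ a' * Y i + ρ a'')) * ρ b
            + ρ a' * (Y i * ρ b - (ρ b' * Y i + ρ b'')) := by
        simp only [map_mul, map_add]
        noncomm_ring
      rw [hkey]
      exact add_mem (twoSidedSpan_mul_right _ haI) (twoSidedSpan_mul_left _ hbI)
    | add a b ha hb =>
      obtain ⟨a', a'', haI⟩ := ha
      obtain ⟨b', b'', hbI⟩ := hb
      refine ⟨a' + b', a'' + b'', ?_⟩
      have hkey : Y i * ρ (a + b) - (ρ (a' + b') * Y i + ρ (a'' + b''))
          = (Y i * ρ a - (ρ a' * Y i + ρ a''))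
            + (Y i * ρ b - (ρ b' * Y i + ρ b'')) := by
        simp only [map_add]
        noncomm_ring
      rw [hkey]
      exact add_mem haI hbI
  -- the normal-form submodules
  set Ymon : (Fin n → ℕ) → FreeAlgebra K (Fin (m + n)) := fun α => pbwMonomial Y α with hYmon
  set Nle : ℕ → Submodule K (FreeAlgebra K (Fin (m + n))) := fun d =>
    Submodule.span K {z | ∃ v α, (∑ j, α j) ≤ d ∧ z = ρ v * Ymon α} with hNledef
  set Ntot : Submodule K (FreeAlgebra K (Fin (m + n))) :=
    Submodule.span K {z | ∃ v α, z = ρ v * Ymon α} with hNtotdef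
  have hNle_mono : ∀ {d e : ℕ}, d ≤ e → Nle d ≤ Nle e := by
    intro d e hde
    refine Submodule.span_mono ?_
    rintro z ⟨v, α, hα, rfl⟩
    exact ⟨v, α, le_trans hα hde, rfl⟩
  have hNle_tot : ∀ d, Nle d ≤ Ntot := by
    intro d
    refine Submodule.span_mono ?_
    rintro z ⟨v, α, _, rfl⟩
    exact ⟨v, α, rfl⟩
  have mulFm : ∀ (u : FreeAlgebra K (Fin m)) (d : ℕ),
      ∀ z ∈ I ⊔ Nle d, ρ u * z ∈ I ⊔ Nle d := by
    intro u d z hz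
    rw [hIdef, twoSidedSpan, hNledef, ← Submodule.span_union] at hz ⊢
    induction hz using Submodule.span_induction with
    | mem z hzm =>
      rcases hzm with ⟨a, s, b0, hsS, rfl⟩ | ⟨v, α, hα, rfl⟩
      · exact Submodule.subset_span (Or.inl ⟨ρ u * a, s, b0, hsS, by simp [mul_assoc]⟩)
      · refine Submodule.subset_span (Or.inr ⟨u * v, α, hα, ?_⟩)
        rw [map_mul, mul_assoc]
    | zero => rw [mul_zero]; exact zero_mem _
    | add y z _ _ hy hz => rw [mul_add]; exact add_mem hy hz
    | smul a z _ hz => rw [mul_smul_comm]; exact Submodule.smul_mem _ _ hz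
  have mulFmTot : ∀ (u : FreeAlgebra K (Fin m)),
      ∀ z ∈ I ⊔ Ntot, ρ u * z ∈ I ⊔ Ntot := by
    intro u z hz
    rw [hIdef, twoSidedSpan, hNtotdef, ← Submodule.span_union] at hz ⊢
    induction hz using Submodule.span_induction with
    | mem z hzm =>
      rcases hzm with ⟨a, s, b0, hsS, rfl⟩ | ⟨v, α, rfl⟩
      · exact Submodule.subset_span (Or.inl ⟨ρ u * a, s, b0, hsS, by simp [mul_assoc]⟩)
      · refine Submodule.subset_span (Or.inr ⟨u * v, α, ?_⟩)
        rw [map_mul, mul_assoc]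
    | zero => rw [mul_zero]; exact zero_mem _
    | add y z _ _ hy hz => rw [mul_add]; exact add_mem hy hz
    | smul a z _ hz => rw [mul_smul_comm]; exact Submodule.smul_mem _ _ hz
  -- Lemma B : multiplying ordered monomials by a generator Y i
  have keyB : ∀ d : ℕ, ∀ iv : ℕ, ∀ i : Fin n, i.1 = iv → ∀ α : Fin n → ℕ, (∑ j, α j) ≤ d →
      Y i * Ymon α ∈ I ⊔ Nle (d + 1) := by
    have Ymon_upd : ∀ (α : Fin n → ℕ) (i : Fin n), (∀ k, k < i → α k = 0) →
        Y i * Ymon α = Ymon (Function.update α i (α i + 1)) := by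
      intro α i hk
      rw [hYmon]
      exact pbwMonomial_mul_update Y α i hk
    have Ymon_peel : ∀ α : Fin n → ℕ, α ≠ 0 → ∃ j α', (∀ k, k < j → α k = 0) ∧
        (∑ t, α t) = (∑ t, α' t) + 1 ∧ Ymon α = Y j * Ymon α' := by
      intro α h0
      obtain ⟨j, α', h1, h2, h3⟩ := pbwMonomial_peel Y α h0
      exact ⟨j, α', h1, h2, by rw [hYmon]; exact h3⟩
    intro d
    induction d using Nat.strong_induction_on with
    | _ d ihd =>
    intro iv
    induction iv using Nat.strong_induction_on with
    | _ iv ihi =>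
    intro i hi α hα
    by_cases hα0 : α = 0
    · subst hα0
      rw [Ymon_upd 0 i (fun k _ => rfl)]
      refine Submodule.mem_sup_right (Submodule.subset_span ⟨1, _, ?_, by rw [map_one, one_mul]⟩)
      rw [sum_update_succ (0 : Fin n → ℕ) i]
      simp
    · obtain ⟨j, α', hjmin, hsum, hpeel⟩ := Ymon_peel α hα0
      by_cases hij : i ≤ j
      · rw [Ymon_upd α i (fun k hk => hjmin k (lt_of_lt_of_le hk hij))]
        refine Submodule.mem_sup_right (Submodule.subset_span
          ⟨1, _, ?_, by rw [map_one, one_mul]⟩)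
        rw [sum_update_succ α i]
        omega
      · push_neg at hij
        have hsum' : (∑ t, α' t) < d := by omega
        have hexp : Y i * Ymon α = rel3 j i * Ymon α' + lam j i • (Y j * (Y i * Ymon α'))
            + ρ (p0 j i) * Ymon α' + ∑ k, ρ (pr j i k) * (Y k * Ymon α') := by
          rw [hpeel, hrel3def]
          simp only [sub_mul, smul_mul_assoc, Finset.sum_mul, mul_assoc]
          abel
        rw [hexp]
        have hYk : ∀ k : Fin n, Y k * Ymon α' ∈ I ⊔ Nle d := by
          intro k
          have hk := ihd (∑ t, α' t) hsum' k.1 k rfl α' le_rfl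
          exact (sup_le_sup_left (hNle_mono (by omega)) I) hk
        have t1 : rel3 j i * Ymon α' ∈ I ⊔ Nle (d + 1) :=
          Submodule.mem_sup_left (twoSidedSpan_mul_right _ (hrel3I j i))
        have t3 : ρ (p0 j i) * Ymon α' ∈ I ⊔ Nle (d + 1) :=
          Submodule.mem_sup_right (Submodule.subset_span ⟨p0 j i, α', by omega, rfl⟩)
        have t4 : ∑ k, ρ (pr j i k) * (Y k * Ymon α') ∈ I ⊔ Nle (d + 1) := by
          refine Submodule.sum_mem _ fun k _ => ?_
          have hk := mulFm (pr j i k) d _ (hYk k)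
          exact (sup_le_sup_left (hNle_mono (by omega)) I) hk
        have hgen : ∀ z ∈ I ⊔ Nle d, Y j * z ∈ I ⊔ Nle (d + 1) := by
          intro z hzm
          rw [hIdef, twoSidedSpan, hNledef, ← Submodule.span_union] at hzm
          induction hzm using Submodule.span_induction with
          | mem z hzm =>
            rcases hzm with ⟨a, s, b0, hsS, rfl⟩ | ⟨v, β, hβ, rfl⟩
            · exact Submodule.mem_sup_left
                (twoSidedSpan_mul_left _ (Submodule.subset_span ⟨a, s, b0, hsS, rfl⟩))
            · obtain ⟨v', v'', hA⟩ := lemA j v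
              have hkey : Y j * (ρ v * Ymon β)
                  = (Y j * ρ v - (ρ v' * Y j + ρ v'')) * Ymon β
                    + ρ v' * (Y j * Ymon β) + ρ v'' * Ymon β := by noncomm_ring
              rw [hkey]
              refine add_mem (add_mem
                (Submodule.mem_sup_left (twoSidedSpan_mul_right _ hA)) ?_) ?_
              · have hYjβ : Y j * Ymon β ∈ I ⊔ Nle (d + 1) :=
                  ihi j.1 (by rw [← hi]; exact hij) j rfl β hβ
                exact mulFm v' (d + 1) _ hYjβ
              · exact Submodule.mem_sup_right (Submodule.subset_span ⟨v'', β, by omega, rfl⟩)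
          | zero => rw [mul_zero]; exact zero_mem _
          | add y z _ _ hy hz => rw [mul_add]; exact add_mem hy hz
          | smul a z _ hz => rw [mul_smul_comm]; exact Submodule.smul_mem _ _ hz
        have t2 : lam j i • (Y j * (Y i * Ymon α')) ∈ I ⊔ Nle (d + 1) :=
          Submodule.smul_mem _ _ (hgen _ (hYk i))
        exact add_mem (add_mem (add_mem t1 t2) t3) t4
  have YmulTot : ∀ (i : Fin n), ∀ z ∈ I ⊔ Ntot, Y i * z ∈ I ⊔ Ntot := by
    intro i z hz
    rw [hIdef, twoSidedSpan, hNtotdef, ← Submodule.span_union] at hz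
    induction hz using Submodule.span_induction with
    | mem z hzm =>
      rcases hzm with ⟨a, s, b0, hsS, rfl⟩ | ⟨v, α, rfl⟩
      · exact Submodule.mem_sup_left
          (twoSidedSpan_mul_left _ (Submodule.subset_span ⟨a, s, b0, hsS, rfl⟩))
      · obtain ⟨v', v'', hA⟩ := lemA i v
        have hkey : Y i * (ρ v * Ymon α)
            = (Y i * ρ v - (ρ v' * Y i + ρ v'')) * Ymon α
              + ρ v' * (Y i * Ymon α) + ρ v'' * Ymon α := by noncomm_ring
        rw [hkey]
        refine add_mem (add_mem
          (Submodule.mem_sup_left (twoSidedSpan_mul_right _ hA)) ?_) ?_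
        · have hYα : Y i * Ymon α ∈ I ⊔ Ntot := by
            have hk := keyB (∑ t, α t) i.1 i rfl α le_rfl
            exact (sup_le_sup_left (hNle_tot _) I) hk
          exact mulFmTot v' _ hYα
        · exact Submodule.mem_sup_right (Submodule.subset_span ⟨v'', α, rfl⟩)
    | zero => rw [mul_zero]; exact zero_mem _
    | add y z _ _ hy hz => rw [mul_add]; exact add_mem hy hz
    | smul a z _ hz => rw [mul_smul_comm]; exact Submodule.smul_mem _ _ hz
  -- spanning : every element is congruent mod I to a normal form
  have htop : ∀ w : FreeAlgebra K (Fin (m + n)), w ∈ I ⊔ Ntot := by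
    have hone : (1 : FreeAlgebra K (Fin (m + n))) ∈ I ⊔ Ntot := by
      refine Submodule.mem_sup_right (Submodule.subset_span ⟨1, 0, ?_⟩)
      rw [map_one, one_mul, hYmon]
      exact (pbwMonomial_zero Y).symm
    have hmulgen : ∀ w : FreeAlgebra K (Fin (m + n)), ∀ z ∈ I ⊔ Ntot, w * z ∈ I ⊔ Ntot := by
      intro w
      induction w using FreeAlgebra.induction with
      | grade0 r =>
        intro z hz
        rw [← Algebra.smul_def]
        exact Submodule.smul_mem _ _ hz
      | grade1 cc =>
        intro z hz
        induction cc using Fin.addCases with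
        | left k =>
          have : FreeAlgebra.ι K (Fin.castAdd n k) = ρ (FreeAlgebra.ι K k) := by
            rw [hρdef, rhom_ι]
          rw [this]
          exact mulFmTot _ _ hz
        | right j => exact YmulTot j z hz
      | mul a b ha hb =>
        intro z hz
        rw [mul_assoc]
        exact ha _ (hb z hz)
      | add a b ha hb =>
        intro z hz
        rw [add_mul]
        exact add_mem (ha z hz) (hb z hz)
    intro w
    simpa using hmulgen w 1 hone
  -- the kernel inclusion
  have hφmem : ∀ v, φ v ∈ R := fun v => by
    rw [← SetLike.mem_coe, ← hrange]; exact Set.mem_range_self _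
  have hFYmon : ∀ α : Fin n → ℕ, F (Ymon α) = pbwMonomial x α := by
    intro α
    rw [hYmon, show F (pbwMonomial Y α)
      = (F : FreeAlgebra K (Fin (m + n)) →+* A) (pbwMonomial Y α) from rfl, map_pbw]
    congr 1
    funext j
    exact hFY j
  have hkerI : (RingHom.ker F).restrictScalars K ≤ I := by
    obtain ⟨b, hb⟩ := h.isBasis
    intro w hw
    have hwF : F w = 0 := by simpa [RingHom.mem_ker] using hw
    obtain ⟨zI, hzI, zN, hzN, hwsum⟩ := Submodule.mem_sup.mp (htop w)
    have hFzI : F zI = 0 := by simpa [RingHom.mem_ker] using hIker hzI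
    have hFzN : F zN = 0 := by
      rw [← hwsum, map_add, hFzI, zero_add] at hwF
      exact hwF
    set Φ : ((Fin n → ℕ) →₀ FreeAlgebra K (Fin m)) →ₗ[K] FreeAlgebra K (Fin (m + n)) :=
      Finsupp.lsum K (fun α => (LinearMap.mulRight K (Ymon α)).comp ρ.toLinearMap) with hΦdef
    have hNran : Ntot ≤ LinearMap.range Φ := by
      rw [hNtotdef, Submodule.span_le]
      rintro z ⟨v, α, rfl⟩
      exact ⟨Finsupp.single α v, by simp [hΦdef]⟩
    obtain ⟨f, hf⟩ := hNran hzN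
    have hΦsum : Φ f = ∑ α ∈ f.support, ρ (f α) * Ymon α := by
      rw [hΦdef, Finsupp.lsum_apply]
      rfl
    have hFzN' : ∑ α ∈ f.support, φ (f α) * pbwMonomial x α = 0 := by
      rw [← hFzN, ← hf, hΦsum, map_sum]
      refine Finset.sum_congr rfl fun α _ => ?_
      rw [map_mul, hFρ, hFYmon]
    set g : (Fin n → ℕ) →₀ R :=
      Finsupp.mapRange (fun v => (⟨φ v, hφmem v⟩ : R)) (Subtype.ext (map_zero φ)) f with hgdef
    have hlc : Finsupp.linearCombination R ⇑b g = 0 := by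
      rw [Finsupp.linearCombination_apply]
      rw [Finsupp.sum_of_support_subset g Finsupp.support_mapRange _
        (fun i _ => zero_smul R (b i))]
      rw [← hFzN']
      refine Finset.sum_congr rfl fun α _ => ?_
      rw [hgdef, Finsupp.mapRange_apply, subalg_smul_def, hb]
    have hg0 : g = 0 := by
      have := b.repr_linearCombination g
      rw [hlc, map_zero] at this
      exact this.symm
    have hfker : ∀ α, φ (f α) = 0 := by
      intro α
      have : g α = 0 := by rw [hg0]; rfl
      rw [hgdef, Finsupp.mapRange_apply] at this
      exact Subtype.ext_iff.mp this
    have hzNI : zN ∈ I := by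
      rw [← hf, hΦsum]
      refine Submodule.sum_mem _ fun α _ => ?_
      refine twoSidedSpan_mul_right _ (hρkerI (f α) ?_)
      rw [← hTker]
      simpa [RingHom.mem_ker] using hfker α
    rw [← hwsum]
    exact add_mem hzI hzNI
  refine ⟨S, ?_, le_antisymm hkerI hIker⟩
  -- degrees
  have hρw : ∀ {d : ℕ} {v : FreeAlgebra K (Fin m)}, v ∈ wordLengthComponent K m d →
      ρ v ∈ wordLengthComponent K (m + n) d := fun hv => map_wlc ρ hρspan hv
  have hYw : ∀ i : Fin n, Y i ∈ wordLengthComponent K (m + n) 1 := fun i => ι_mem_wlc _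
  have hrel2w : ∀ (i : Fin n) (k : Fin m), rel2 i k ∈ wordLengthComponent K (m + n) 2 := by
    intro i k
    rw [hrel2def]
    have h1 : Y i * ρ (FreeAlgebra.ι K k) ∈ wordLengthComponent K (m + n) 2 := by
      have := mul_mem_wlc (hYw i) (hρw (ι_mem_wlc k))
      exact this
    have h2 : ρ (L i k) * Y i ∈ wordLengthComponent K (m + n) 2 :=
      mul_mem_wlc (hρw (hLw i k)) (hYw i)
    exact sub_mem (sub_mem h1 h2) (hρw (hQw i k))
  have hrel3w : ∀ i j : Fin n, rel3 i j ∈ wordLengthComponent K (m + n) 2 := by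
    intro i j
    rw [hrel3def]
    refine sub_mem (sub_mem (sub_mem (mul_mem_wlc (hYw j) (hYw i))
      (Submodule.smul_mem _ _ (mul_mem_wlc (hYw i) (hYw j)))) (hρw (hp0w i j))) ?_
    exact Submodule.sum_mem _ fun k _ => mul_mem_wlc (hρw (hprw i j k)) (hYw k)
  intro g hg
  simp only [hSdef, Finset.mem_union, Finset.mem_image] at hg
  rcases hg with ((⟨g₀, hg₀, rfl⟩ | ⟨p, _, rfl⟩) | ⟨p, _, rfl⟩)
  · exact Or.inl ⟨g₀, hg₀, rfl⟩
  · exact Or.inr (hrel2w p.1 p.2)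
  · exact Or.inr (hrel3w p.1 p.2)

end Master

/-- Let `R` be a connected ℕ-graded `K`-algebra with a finite presentation
`φ : K⟨t₁,…,tₘ⟩ → R`, sending each generator into `R₁`, whose kernel is generated as a
two-sided ideal by finitely many word-length homogeneous elements; and let `A` be a graded
skew PBW extension of `R` with generators `x₁,…,xₙ`. Then `A` is finitely presented: there
is a surjective `F : K⟨y₁,…,y_{m+n}⟩ → A` with `F yₖ = φ tₖ` and `F y_{m+j} = xⱼ` whose
kernel is generated, as a two-sided ideal, by finitely many word-length homogeneous
elements; moreover if `ker φ` is generated by homogeneous elements of degree 2, then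
`ker F` is generated by finitely many homogeneous elements of degree 2. -/
theorem gradedSkewPBW_finitelyPresented
    {K A : Type*} [Field K] [Ring A] [Algebra K A]
    (R : Subalgebra K A) (RG : ℕ → Submodule K A) {n : ℕ} (x : Fin n → A)
    (h : IsGradedSkewPBWExtension K R RG x)
    (hconn : RG 0 = Submodule.span K {(1 : A)})
    {m : ℕ} (φ : FreeAlgebra K (Fin m) →ₐ[K] A)
    (hrange : Set.range φ = (R : Set A))
    (hdeg1 : ∀ k : Fin m, φ (FreeAlgebra.ι K k) ∈ RG 1)
    (hker : ∃ T : Finset (FreeAlgebra K (Fin m)),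
      (∀ g ∈ T, ∃ d : ℕ, g ∈ wordLengthComponent K m d) ∧
      (RingHom.ker φ).restrictScalars K = twoSidedSpan K (T : Set (FreeAlgebra K (Fin m)))) :
    ∃ F : FreeAlgebra K (Fin (m + n)) →ₐ[K] A,
      Function.Surjective F ∧
      (∀ k : Fin m, F (FreeAlgebra.ι K (Fin.castAdd n k)) = φ (FreeAlgebra.ι K k)) ∧
      (∀ j : Fin n, F (FreeAlgebra.ι K (Fin.natAdd m j)) = x j) ∧
      (∃ S : Finset (FreeAlgebra K (Fin (m + n))),
        (∀ g ∈ S, ∃ d : ℕ, g ∈ wordLengthComponent K (m + n) d) ∧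
        (RingHom.ker F).restrictScalars K
          = twoSidedSpan K (S : Set (FreeAlgebra K (Fin (m + n))))) ∧
      ((∃ T' : Set (FreeAlgebra K (Fin m)),
          (∀ g ∈ T', g ∈ wordLengthComponent K m 2) ∧
          (RingHom.ker φ).restrictScalars K = twoSidedSpan K T') →
        ∃ S' : Finset (FreeAlgebra K (Fin (m + n))),
          (∀ g ∈ S', g ∈ wordLengthComponent K (m + n) 2) ∧
          (RingHom.ker F).restrictScalars K
            = twoSidedSpan K (S' : Set (FreeAlgebra K (Fin (m + n))))) := by
  classical
  obtain ⟨b, hb⟩ := h.isBasis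
  refine ⟨Fhom K φ x, Fhom_surjective φ x b hb hrange,
    fun k => Fhom_castAdd K φ x k, fun j => Fhom_natAdd K φ x j, ?_, ?_⟩
  · -- finitely many homogeneous relations
    obtain ⟨T, hTdeg, hTker⟩ := hker
    obtain ⟨S, hSdeg, hSker⟩ := master_kernel R RG x h hconn φ hrange hdeg1 T hTker
    refine ⟨S, fun g hg => ?_, hSker⟩
    rcases hSdeg g hg with ⟨g₀, hg₀, rfl⟩ | hg2
    · obtain ⟨d, hd⟩ := hTdeg g₀ hg₀
      exact ⟨d, map_wlc (rhom K m n) (fun k => by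
        rw [rhom_ι]; exact Submodule.subset_span (Set.mem_range_self _)) hd⟩
    · exact ⟨2, hg2⟩
  · -- the quadratic case
    rintro ⟨T', hT'deg, hT'ker⟩
    obtain ⟨T, hTdeg, hTker⟩ := hker
    -- replace T by a finite subset of T'
    have hTmem : ∀ g ∈ T, g ∈ twoSidedSpan K T' := by
      intro g hg
      rw [← hT'ker, hTker]
      exact mem_twoSidedSpan_of_mem hg
    have hWex : ∀ g ∈ T, ∃ W : Finset (FreeAlgebra K (Fin m)), ↑W ⊆ T' ∧
        g ∈ twoSidedSpan K (W : Set (FreeAlgebra K (Fin m))) := by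
      intro g hg
      obtain ⟨U, hUsub, hgU⟩ := Submodule.mem_span_finite_of_mem_span (hTmem g hg)
      have hzex : ∀ z ∈ U, ∃ a s b0, s ∈ T' ∧ z = a * s * b0 := fun z hz => hUsub hz
      choose az sz bz hsz hzeq using hzex
      refine ⟨U.attach.image (fun z => sz z.1 z.2), ?_, ?_⟩
      · intro w hw
        simp only [Finset.coe_image, Set.mem_image, Finset.mem_coe, Finset.mem_attach] at hw
        obtain ⟨z, -, rfl⟩ := hw
        exact hsz z.1 z.2
      · refine Submodule.span_le.mpr ?_ hgU
        intro z hz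
        have hzU : z ∈ U := Finset.mem_coe.mp hz
        refine Submodule.subset_span ⟨az z hzU, sz z hzU, bz z hzU, ?_, hzeq z hzU⟩
        rw [Finset.coe_image]
        exact Set.mem_image_of_mem _ (by simp : (⟨z, hzU⟩ : {y // y ∈ U}) ∈ ↑U.attach)
    choose W hWsub hWmem using hWex
    set T'' : Finset (FreeAlgebra K (Fin m)) := T.attach.biUnion (fun g => W g g.2) with hT''def
    have hT''sub : (T'' : Set (FreeAlgebra K (Fin m))) ⊆ T' := by
      intro w hw
      simp only [hT''def, Finset.coe_biUnion, Set.mem_iUnion, Finset.mem_coe,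
        Finset.mem_attach] at hw
      obtain ⟨g, -, hwW⟩ := hw
      exact hWsub g g.2 hwW
    have hT''ker : (RingHom.ker φ).restrictScalars K
        = twoSidedSpan K (T'' : Set (FreeAlgebra K (Fin m))) := by
      refine le_antisymm ?_ ?_
      · rw [hTker]
        refine twoSidedSpan_le_of_subset_span ?_
        intro s hs
        refine twoSidedSpan_mono ?_ (hWmem s hs)
        intro w hw
        simp only [hT''def, Finset.coe_biUnion, Set.mem_iUnion, Finset.mem_coe,
          Finset.mem_attach]
        exact ⟨⟨s, hs⟩, trivial, hw⟩
      · rw [hT'ker]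
        exact twoSidedSpan_mono hT''sub
    obtain ⟨S', hS'deg, hS'ker⟩ := master_kernel R RG x h hconn φ hrange hdeg1 T'' hT''ker
    refine ⟨S', fun g hg => ?_, hS'ker⟩
    rcases hS'deg g hg with ⟨g₀, hg₀, rfl⟩ | hg2
    · exact map_wlc (rhom K m n) (fun k => by
        rw [rhom_ι]; exact Submodule.subset_span (Set.mem_range_self _))
        (hT'deg g₀ (hT''sub hg₀))
    · exact hg2
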